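/- Uniform Gronwall Lemma: Let f, g, h be nonnegative locally integrable functions on (t₀, ∞) such that f is absolutely continuous with f'(t) ≤ g(t)f(t) + h(t) for all t ≥ t₀, and suppose there exist positive constants r, a₁, a₂, a₃ such that for all t ≥ t₀, ∫_t^{t+r} f ≤ a₁, ∫_t^{t+r} g ≤ a₂, ∫_t^{t+r} h ≤ a₃. Then f(t + r) ≤ (a₁/r + a₃)·e^{a₂} for all t ≥ t₀. -/

import Mathlib

open MeasureTheory intervalIntegral

open Set in
/-- Grönwall inequality in integral form, with a continuous nonnegative kernel. -/
lemma gronwall_cont {s b c : ℝ} {f k : ℝ → ℝ} (hsb : s ≤ b)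
    (hf : Continuous f) (hk : Continuous k) (hk0 : ∀ x, 0 ≤ k x)
    (hle : ∀ u ∈ Icc s b, f u ≤ c + ∫ x in s..u, k x * f x) :
    f b ≤ c * Real.exp (∫ x in s..b, k x) := by
  set Φ : ℝ → ℝ := fun u => c + ∫ x in s..u, k x * f x with hΦdef
  set K : ℝ → ℝ := fun u => ∫ x in s..u, k x with hKdef
  have hkf : Continuous fun x => k x * f x := hk.mul hf
  have hΦd : ∀ u : ℝ, HasDerivAt Φ (k u * f u) u := fun u =>
    (intervalIntegral.integral_hasDerivAt_right (hkf.intervalIntegrable s u)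
      (hkf.stronglyMeasurableAtFilter _ _) hkf.continuousAt).const_add c
  have hKd : ∀ u : ℝ, HasDerivAt K (k u) u := fun u =>
    intervalIntegral.integral_hasDerivAt_right (hk.intervalIntegrable s u)
      (hk.stronglyMeasurableAtFilter _ _) hk.continuousAt
  set Ψ : ℝ → ℝ := fun u => Φ u * Real.exp (-K u) with hΨdef
  have hΨd : ∀ u : ℝ, HasDerivAt Ψ ((k u * f u - k u * Φ u) * Real.exp (-K u)) u := by
    intro u
    have h1 : HasDerivAt (fun x => Real.exp (-K x)) (Real.exp (-K u) * -k u) u :=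
      ((hKd u).neg).exp
    have h2 := (hΦd u).mul h1
    exact h2.congr_deriv (by ring)
  have hΨdiff : Differentiable ℝ Ψ := fun u => (hΨd u).differentiableAt
  have hΨmono : AntitoneOn Ψ (Icc s b) := by
    apply antitoneOn_of_deriv_nonpos (convex_Icc s b) hΨdiff.continuous.continuousOn
      hΨdiff.differentiableOn
    intro x hx
    rw [interior_Icc] at hx
    rw [(hΨd x).deriv]
    have hfx : f x ≤ Φ x := hle x (Ioo_subset_Icc_self hx)
    nlinarith [mul_nonneg (mul_nonneg (hk0 x) (sub_nonneg.2 hfx)) (Real.exp_pos (-K x)).le]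
  have h1 : Ψ b ≤ Ψ s := hΨmono (left_mem_Icc.2 hsb) (right_mem_Icc.2 hsb) hsb
  have hΨs : Ψ s = c := by
    simp [hΨdef, hΦdef, hKdef]
  have hfb : f b ≤ Φ b := hle b (right_mem_Icc.2 hsb)
  have hΦb : Φ b = Ψ b * Real.exp (K b) := by
    simp only [hΨdef]
    rw [mul_assoc, ← Real.exp_add]
    norm_num
  have h2 : Ψ b * Real.exp (K b) ≤ c * Real.exp (K b) :=
    mul_le_mul_of_nonneg_right (hΨs ▸ h1) (Real.exp_pos (K b)).le
  calc f b ≤ Φ b := hfb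
    _ = Ψ b * Real.exp (K b) := hΦb
    _ ≤ c * Real.exp (K b) := h2

open Set in
/-- Grönwall inequality in integral form, with an integrable nonnegative kernel. -/
lemma gronwall_integrable {s b c M : ℝ} {f g : ℝ → ℝ} (hsb : s ≤ b) (hc : 0 ≤ c)
    (hM : 0 ≤ M) (hf : Continuous f) (hfM : ∀ x, |f x| ≤ M)
    (hg_int : IntervalIntegrable g volume s b)
    (hg0 : ∀ x ∈ Ioc s b, 0 ≤ g x)
    (hle : ∀ u ∈ Icc s b, f u ≤ c + ∫ x in s..u, g x * f x) :
    f b ≤ c * Real.exp (∫ x in s..b, g x) := by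
  have key : ∀ ε : ℝ, 0 < ε → f b ≤ (c + M * ε) * Real.exp ((∫ x in s..b, g x) + ε) := by
    intro ε hε
    set g₀ : ℝ → ℝ := (Ioc s b).indicator g with hg₀def
    have hg₀_nonneg : ∀ x, 0 ≤ g₀ x := fun x =>
      indicator_nonneg (fun y hy => hg0 y hy) x
    have hg₀_int : Integrable g₀ volume :=
      ((intervalIntegrable_iff_integrableOn_Ioc_of_le hsb).1 hg_int).integrable_indicator
        measurableSet_Ioc
    obtain ⟨k, k_supp, hkε, k_cont, k_int⟩ :=
      hg₀_int.exists_hasCompactSupport_integral_sub_le hε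
    set k' : ℝ → ℝ := fun x => max (k x) 0 with hk'def
    have hk'_cont : Continuous k' := k_cont.max continuous_const
    have hk'_supp : HasCompactSupport k' := by
      apply k_supp.comp_left (g := fun y : ℝ => max y 0)
      simp
    have hk'_int : Integrable k' volume := hk'_cont.integrable_of_hasCompactSupport hk'_supp
    have hk'_nonneg : ∀ x, 0 ≤ k' x := fun x => le_max_right _ _
    have hptwise : ∀ x, |g₀ x - k' x| ≤ |g₀ x - k x| := by
      intro x
      rcases le_or_gt 0 (k x) with hk0 | hk0
      · have : k' x = k x := max_eq_left hk0
        rw [this]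
      · have hx0 : k' x = 0 := max_eq_right hk0.le
        rw [hx0, sub_zero, abs_of_nonneg (hg₀_nonneg x),
          abs_of_nonneg (by linarith [hg₀_nonneg x] : (0:ℝ) ≤ g₀ x - k x)]
        linarith
    have hdiff_int : Integrable (fun x => g₀ x - k' x) volume := hg₀_int.sub hk'_int
    have hL1 : (∫ x, |g₀ x - k' x|) ≤ ε := by
      calc (∫ x, |g₀ x - k' x|) ≤ ∫ x, |g₀ x - k x| :=
            integral_mono hdiff_int.abs (hg₀_int.sub k_int).abs hptwise
        _ ≤ ε := by simpa [Real.norm_eq_abs] using hkε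
    -- integrability of products
    have hfmeas : AEStronglyMeasurable f volume := hf.aestronglyMeasurable
    have hbound : ∃ C, ∀ x, ‖f x‖ ≤ C := ⟨M, fun x => by simpa [Real.norm_eq_abs] using hfM x⟩
    have hg₀f_int : Integrable (fun x => g₀ x * f x) volume := by
      have := hg₀_int.bdd_mul hfmeas (ae_of_all _ hbound.choose_spec)
      simpa [mul_comm] using this
    have hdiff_f_int : Integrable (fun x => (g₀ x - k' x) * f x) volume := by
      have := hdiff_int.bdd_mul hfmeas (ae_of_all _ hbound.choose_spec)
      simpa [mul_comm] using this
    have hk'f_int : Integrable (fun x => k' x * f x) volume :=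
      (hk'_cont.mul hf).integrable_of_hasCompactSupport (hk'_supp.mul_right)
    -- error bound on intervals
    have hInt_bound : ∀ u ∈ Icc s b, (∫ x in s..u, (g₀ x - k' x) * f x) ≤ M * ε := by
      intro u hu
      have h2 : |∫ x in s..u, (g₀ x - k' x) * f x| ≤ ∫ x in s..u, |(g₀ x - k' x) * f x| :=
        intervalIntegral.abs_integral_le_integral_abs hu.1
      have h3 : (∫ x in s..u, |(g₀ x - k' x) * f x|) ≤ ∫ x in s..u, |g₀ x - k' x| * M := by
        apply intervalIntegral.integral_mono_on hu.1
          hdiff_f_int.abs.intervalIntegrable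
          (hdiff_int.abs.mul_const M).intervalIntegrable
        intro x _
        rw [abs_mul]
        exact mul_le_mul_of_nonneg_left (hfM x) (abs_nonneg _)
      have h4 : (∫ x in s..u, |g₀ x - k' x| * M) ≤ (∫ x, |g₀ x - k' x|) * M := by
        rw [intervalIntegral.integral_of_le hu.1, ← MeasureTheory.integral_mul_const]
        exact setIntegral_le_integral (hdiff_int.abs.mul_const M)
          (Filter.Eventually.of_forall fun x => mul_nonneg (abs_nonneg _) hM)
      have h5 : (∫ x, |g₀ x - k' x|) * M ≤ ε * M :=
        mul_le_mul_of_nonneg_right hL1 hM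
      have := le_abs_self (∫ x in s..u, (g₀ x - k' x) * f x)
      nlinarith
    -- replace g by g₀ in the hypothesis
    have hcongr : ∀ u ∈ Icc s b, (∫ x in s..u, g x * f x) = ∫ x in s..u, g₀ x * f x := by
      intro u hu
      rw [intervalIntegral.integral_of_le hu.1, intervalIntegral.integral_of_le hu.1]
      apply setIntegral_congr_fun measurableSet_Ioc
      intro x hx
      have hxm : x ∈ Ioc s b := ⟨hx.1, hx.2.trans hu.2⟩
      simp only [hg₀def, indicator_of_mem hxm]
    have hsplit : ∀ u ∈ Icc s b, (∫ x in s..u, g₀ x * f x)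
        = (∫ x in s..u, k' x * f x) + ∫ x in s..u, (g₀ x - k' x) * f x := by
      intro u _
      have heq : ∀ x : ℝ, g₀ x * f x = k' x * f x + (g₀ x - k' x) * f x := fun x => by ring
      simp_rw [heq]
      exact intervalIntegral.integral_add hk'f_int.intervalIntegrable
        hdiff_f_int.intervalIntegrable
    have hle' : ∀ u ∈ Icc s b, f u ≤ (c + M * ε) + ∫ x in s..u, k' x * f x := by
      intro u hu
      have h0 := hle u hu
      rw [hcongr u hu, hsplit u hu] at h0
      linarith [hInt_bound u hu]
    have hmain := gronwall_cont hsb hf hk'_cont hk'_nonneg hle'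
    -- compare the integrals of the kernels
    have hkg : (∫ x in s..b, k' x) ≤ (∫ x in s..b, g x) + ε := by
      have e1 : (∫ x in s..b, g x) = ∫ x in s..b, g₀ x := by
        rw [intervalIntegral.integral_of_le hsb, intervalIntegral.integral_of_le hsb]
        apply setIntegral_congr_fun measurableSet_Ioc
        intro x hx
        simp only [hg₀def, indicator_of_mem hx]
      have e2 : (∫ x in s..b, k' x) - (∫ x in s..b, g₀ x) = ∫ x in s..b, (k' x - g₀ x) :=
        (intervalIntegral.integral_sub hk'_int.intervalIntegrable
          hg₀_int.intervalIntegrable).symm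
      have e3 : (∫ x in s..b, (k' x - g₀ x)) ≤ ∫ x in s..b, |g₀ x - k' x| := by
        apply intervalIntegral.integral_mono_on hsb
          (hk'_int.sub hg₀_int).intervalIntegrable hdiff_int.abs.intervalIntegrable
        intro x _
        calc k' x - g₀ x ≤ |k' x - g₀ x| := le_abs_self _
          _ = |g₀ x - k' x| := abs_sub_comm _ _
      have e4 : (∫ x in s..b, |g₀ x - k' x|) ≤ ∫ x, |g₀ x - k' x| := by
        rw [intervalIntegral.integral_of_le hsb]
        exact setIntegral_le_integral hdiff_int.abs
          (Filter.Eventually.of_forall fun x => abs_nonneg _)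
      linarith
    calc f b ≤ (c + M * ε) * Real.exp (∫ x in s..b, k' x) := hmain
      _ ≤ (c + M * ε) * Real.exp ((∫ x in s..b, g x) + ε) :=
          mul_le_mul_of_nonneg_left (Real.exp_le_exp.2 hkg)
            (add_nonneg hc (mul_nonneg hM hε.le))
  -- pass to the limit ε → 0⁺
  have htend : Filter.Tendsto (fun ε : ℝ => (c + M * ε) * Real.exp ((∫ x in s..b, g x) + ε))
      (nhdsWithin 0 (Set.Ioi 0)) (nhds (c * Real.exp (∫ x in s..b, g x))) := by
    have hco : Continuous fun ε : ℝ => (c + M * ε) * Real.exp ((∫ x in s..b, g x) + ε) := by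
      continuity
    have h0 := hco.tendsto 0
    simp only [mul_zero, add_zero] at h0
    exact h0.mono_left nhdsWithin_le_nhds
  exact ge_of_tendsto htend (eventually_nhdsWithin_of_forall fun ε hε => key ε hε)

/-- **Uniform Gronwall Lemma.** -/
theorem uniform_gronwall (t₀ r a₁ a₂ a₃ : ℝ) (f g h f' : ℝ → ℝ)
    (hr : 0 < r) (ha₁ : 0 < a₁) (ha₂ : 0 < a₂) (ha₃ : 0 < a₃)
    (hf_nn : ∀ t, t₀ ≤ t → 0 ≤ f t)
    (hg_nn : ∀ t, t₀ ≤ t → 0 ≤ g t)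
    (hh_nn : ∀ t, t₀ ≤ t → 0 ≤ h t)
    (hf_int : ∀ t, t₀ ≤ t → IntervalIntegrable f volume t (t + r))
    (hg_int : ∀ t, t₀ ≤ t → IntervalIntegrable g volume t (t + r))
    (hh_int : ∀ t, t₀ ≤ t → IntervalIntegrable h volume t (t + r))
    (hf_deriv : ∀ t, t₀ ≤ t → HasDerivAt f (f' t) t)
    (hineq : ∀ t, t₀ ≤ t → f' t ≤ g t * f t + h t)
    (hIf : ∀ t, t₀ ≤ t → (∫ s in t..t + r, f s) ≤ a₁)
    (hIg : ∀ t, t₀ ≤ t → (∫ s in t..t + r, g s) ≤ a₂)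
    (hIh : ∀ t, t₀ ≤ t → (∫ s in t..t + r, h s) ≤ a₃) :
    ∀ t, t₀ ≤ t → f (t + r) ≤ (a₁ / r + a₃) * Real.exp a₂ := by
  intro t ht
  have htb : t ≤ t + r := by linarith
  have hcont : ∀ x, t₀ ≤ x → ContinuousAt f x := fun x hx => (hf_deriv x hx).continuousAt
  have hfco : ContinuousOn f (Set.Icc t (t + r)) :=
    fun x hx => (hcont x (ht.trans hx.1)).continuousWithinAt
  -- choose a point `s` minimizing `f` on `[t, t+r]`
  obtain ⟨s, hs_mem, hs_min⟩ := isCompact_Icc.exists_isMinOn (Set.nonempty_Icc.2 htb) hfco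
  have hts : t ≤ s := hs_mem.1
  have hsb : s ≤ t + r := hs_mem.2
  have ht₀s : t₀ ≤ s := ht.trans hts
  -- `f s ≤ a₁ / r` since `f s` is the minimum
  have hfs : f s ≤ a₁ / r := by
    have h1 : (∫ x in t..t + r, (f s : ℝ)) ≤ ∫ x in t..t + r, f x := by
      apply intervalIntegral.integral_mono_on htb intervalIntegrable_const (hf_int t ht)
      intro x hx; exact hs_min hx
    rw [intervalIntegral.integral_const, smul_eq_mul] at h1
    have h2 := hIf t ht
    rw [le_div_iff₀ hr]
    nlinarith
  -- interval integrability on `[s, t+r]`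
  have hsubset : Set.uIcc s (t + r) ⊆ Set.uIcc t (t + r) := by
    rw [Set.uIcc_of_le hsb, Set.uIcc_of_le htb]
    exact Set.Icc_subset_Icc hts le_rfl
  have hg_int_s : IntervalIntegrable g volume s (t + r) := (hg_int t ht).mono_set hsubset
  have hh_int_s : IntervalIntegrable h volume s (t + r) := (hh_int t ht).mono_set hsubset
  have hgf_int : IntervalIntegrable (fun x => g x * f x) volume s (t + r) :=
    hg_int_s.mul_continuousOn (by
      rw [Set.uIcc_of_le hsb]
      exact hfco.mono (Set.Icc_subset_Icc hts le_rfl))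
  -- key integral inequality from the differential inequality
  have hkey : ∀ u ∈ Set.Icc s (t + r), f u ≤ (f s + a₃) + ∫ x in s..u, g x * f x := by
    intro u hu
    have hsu : s ≤ u := hu.1
    have hub : u ≤ t + r := hu.2
    have hsub2 : Set.uIcc s u ⊆ Set.uIcc s (t + r) := by
      rw [Set.uIcc_of_le hsu, Set.uIcc_of_le hsb]
      exact Set.Icc_subset_Icc le_rfl hub
    have hgfu : IntervalIntegrable (fun x => g x * f x) volume s u := hgf_int.mono_set hsub2
    have hhu : IntervalIntegrable h volume s u := hh_int_s.mono_set hsub2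
    have hφint : IntegrableOn (fun x => g x * f x + h x) (Set.Icc s u) volume := by
      have := hgfu.add hhu
      rwa [intervalIntegrable_iff_integrableOn_Icc_of_le hsu] at this
    have hftc := intervalIntegral.sub_le_integral_of_hasDeriv_right_of_le hsu
      (fun x hx => (hcont x (ht₀s.trans hx.1)).continuousWithinAt)
      (fun x hx => ((hf_deriv x (ht₀s.trans hx.1.le)).hasDerivWithinAt))
      hφint (fun x hx => hineq x (ht₀s.trans hx.1.le))
    have hsplit : (∫ x in s..u, (g x * f x + h x))
        = (∫ x in s..u, g x * f x) + ∫ x in s..u, h x :=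
      intervalIntegral.integral_add hgfu hhu
    have hhb : (∫ x in s..u, h x) ≤ a₃ := by
      have hmono := intervalIntegral.integral_mono_interval hts hsu hub
        (ae_restrict_of_forall_mem measurableSet_Ioc
          fun x hx => hh_nn x (ht.trans hx.1.le)) (hh_int t ht)
      exact hmono.trans (hIh t ht)
    rw [hsplit] at hftc
    linarith
  -- clamp `f` to `[s, t+r]` to get a globally continuous bounded function
  set F : ℝ → ℝ := fun x => f (max s (min x (t + r))) with hFdef
  have hclamp_mem : ∀ x : ℝ, max s (min x (t + r)) ∈ Set.Icc s (t + r) := fun x =>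
    ⟨le_max_left _ _, max_le hsb (min_le_right _ _)⟩
  have hFcont : Continuous F := by
    rw [continuous_iff_continuousAt]
    intro x
    have hin : Continuous fun x : ℝ => max s (min x (t + r)) :=
      continuous_const.max (continuous_id.min continuous_const)
    exact ContinuousAt.comp (hcont _ (ht₀s.trans (le_max_left _ _))) hin.continuousAt
  have hFeq : ∀ u ∈ Set.Icc s (t + r), F u = f u := by
    intro u hu
    simp only [hFdef]
    rw [min_eq_left hu.2, max_eq_right hu.1]
  obtain ⟨C, hC⟩ := isCompact_Icc.exists_bound_of_continuousOn hfco
  have hM : (0:ℝ) ≤ max C 0 := le_max_right _ _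
  have hFM : ∀ x, |F x| ≤ max C 0 := by
    intro x
    have := hC _ (Set.Icc_subset_Icc hts le_rfl (hclamp_mem x))
    calc |F x| ≤ C := by simpa [Real.norm_eq_abs, hFdef] using this
      _ ≤ max C 0 := le_max_left _ _
  have hleF : ∀ u ∈ Set.Icc s (t + r), F u ≤ (f s + a₃) + ∫ x in s..u, g x * F x := by
    intro u hu
    rw [hFeq u hu]
    have hIeq : (∫ x in s..u, g x * F x) = ∫ x in s..u, g x * f x := by
      apply intervalIntegral.integral_congr
      intro x hx
      rw [Set.uIcc_of_le hu.1] at hx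
      show g x * F x = g x * f x
      rw [hFeq x ⟨hx.1, hx.2.trans hu.2⟩]
    rw [hIeq]
    exact hkey u hu
  have hc0 : 0 ≤ f s + a₃ := add_nonneg (hf_nn s ht₀s) ha₃.le
  have hmain := gronwall_integrable hsb hc0 hM hFcont hFM hg_int_s
    (fun x hx => hg_nn x (ht₀s.trans hx.1.le)) hleF
  rw [hFeq _ (Set.right_mem_Icc.2 hsb)] at hmain
  have hgb : (∫ x in s..t + r, g x) ≤ a₂ := by
    have hmono := intervalIntegral.integral_mono_interval hts hsb le_rfl
      (ae_restrict_of_forall_mem measurableSet_Ioc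
        fun x hx => hg_nn x (ht.trans hx.1.le)) (hg_int t ht)
    exact hmono.trans (hIg t ht)
  calc f (t + r) ≤ (f s + a₃) * Real.exp (∫ x in s..t + r, g x) := hmain
    _ ≤ (a₁ / r + a₃) * Real.exp a₂ := by
        apply mul_le_mul (by linarith) (Real.exp_le_exp.2 hgb) (Real.exp_pos _).le
        exact add_nonneg (div_nonneg ha₁.le hr.le) ha₃.le
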